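/- arXiv:2303.04775 — 7 statements merged into one kernel-verified Lean document; each statement's English description precedes it below -/
import Mathlib

section
/- Let k > 0, φ > 0, ν ∈ (0,1). The function h(x) = φ x^(ν+1) / (k Γ(ν+3)) satisfies h(0)=0 and, for all x > 0, k · d/dx ( h(x) · (d^ν h/dx^ν)(x) ) = φ h(x), where d^ν/dx^ν is the Caputo derivative of order ν. -/
/-- Caputo fractional derivative of order `ν` with zero starting point. -/
noncomputable def caputo (ν : ℝ) (f : ℝ → ℝ) (z : ℝ) : ℝ :=
  (Real.Gamma (1 - ν))⁻¹ * ∫ s in (0:ℝ)..z, (z - s) ^ (-ν) * deriv f s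

open intervalIntegral in
lemma real_beta_aux {ν x : ℝ} (hν0 : 0 < ν) (hν1 : ν < 1) (hx : 0 < x) :
    ∫ s in (0:ℝ)..x, (x - s) ^ (-ν) * s ^ ν
      = x * (Real.Gamma (ν + 1) * Real.Gamma (1 - ν)) := by
  have hs : (0:ℝ) < ((ν:ℂ) + 1).re := by simp; linarith
  have ht : (0:ℝ) < ((1:ℂ) - ν).re := by simp [Complex.sub_re]; linarith
  have hbeta := Complex.Gamma_mul_Gamma_eq_betaIntegral hs ht
  have hGamma2 : ((ν:ℂ) + 1) + (1 - ν) = 2 := by ring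
  rw [hGamma2] at hbeta
  have h2 : Complex.Gamma 2 = 1 := by
    rw [show (2:ℂ) = ((2:ℝ):ℂ) by norm_num, Complex.Gamma_ofReal, Real.Gamma_two,
      Complex.ofReal_one]
  rw [h2, one_mul] at hbeta
  have hscaled := Complex.betaIntegral_scaled ((ν:ℂ) + 1) (1 - ν) hx
  rw [← hbeta] at hscaled
  have e1 : ((ν:ℂ) + 1) - 1 = (ν:ℂ) := by ring
  have e2 : ((1:ℂ) - ν) - 1 = ((-ν : ℝ) : ℂ) := by push_cast; ring
  have e3 : ((ν:ℂ) + 1) + (1 - ν) - 1 = 1 := by ring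
  rw [e1, e2, e3, Complex.cpow_one] at hscaled
  have hconv : ∫ s in (0:ℝ)..x, (((x - s) ^ (-ν) * s ^ ν : ℝ) : ℂ)
      = (x : ℂ) * (Complex.Gamma (ν + 1) * Complex.Gamma (1 - ν)) := by
    rw [← hscaled]
    refine intervalIntegral.integral_congr fun s hs' => ?_
    rw [Set.uIcc_of_le hx.le] at hs'
    push_cast
    rw [Complex.ofReal_cpow (by linarith [hs'.2] : (0:ℝ) ≤ x - s),
      Complex.ofReal_cpow hs'.1]
    push_cast
    ring
  rw [integral_ofReal] at hconv
  have : (x : ℂ) * (Complex.Gamma (ν + 1) * Complex.Gamma (1 - ν))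
      = ((x * (Real.Gamma (ν + 1) * Real.Gamma (1 - ν)) : ℝ) : ℂ) := by
    push_cast [← Complex.Gamma_ofReal]
    norm_num
  rw [this] at hconv
  exact_mod_cast hconv

theorem steady_fractional_solution (k φ ν : ℝ) (hk : 0 < k) (hφ : 0 < φ)
    (hν : ν ∈ Set.Ioo (0:ℝ) 1)
    (h : ℝ → ℝ) (hdef : h = fun x => φ * x ^ (ν + 1) / (k * Real.Gamma (ν + 3))) :
    h 0 = 0 ∧ ∀ x > 0, k * deriv (fun x => h x * caputo ν h x) x = φ * h x := by
  obtain ⟨hν0, hν1⟩ := hν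
  set C : ℝ := φ / (k * Real.Gamma (ν + 3)) with hC
  have hC' : h = fun x => C * x ^ (ν + 1) := by
    rw [hdef]; funext x; rw [hC]; ring
  have hG1pos : 0 < Real.Gamma (1 - ν) := Real.Gamma_pos_of_pos (by linarith)
  have hGν1pos : 0 < Real.Gamma (ν + 1) := Real.Gamma_pos_of_pos (by linarith)
  have hGν3pos : 0 < Real.Gamma (ν + 3) := Real.Gamma_pos_of_pos (by linarith)
  -- derivative of h
  have hderiv : ∀ s : ℝ, deriv h s = C * (ν + 1) * s ^ ν := by
    intro s
    have : HasDerivAt h (C * ((ν + 1) * s ^ (ν + 1 - 1))) s := by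
      rw [hC']
      exact (Real.hasDerivAt_rpow_const (Or.inr (by linarith))).const_mul C
    rw [this.deriv]
    norm_num
    ring
  -- caputo evaluated
  have hcap : ∀ x : ℝ, 0 < x → caputo ν h x = C * Real.Gamma (ν + 2) * x := by
    intro x hx
    unfold caputo
    have : ∫ s in (0:ℝ)..x, (x - s) ^ (-ν) * deriv h s
        = (C * (ν + 1)) * ∫ s in (0:ℝ)..x, (x - s) ^ (-ν) * s ^ ν := by
      rw [← intervalIntegral.integral_const_mul]
      refine intervalIntegral.integral_congr fun s _ => ?_
      rw [hderiv s]; ring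
    rw [this, real_beta_aux hν0 hν1 hx]
    have hG2 : Real.Gamma (ν + 2) = (ν + 1) * Real.Gamma (ν + 1) := by
      rw [show ν + 2 = (ν + 1) + 1 by ring, Real.Gamma_add_one (by linarith)]
    rw [hG2]
    field_simp
  constructor
  · simp only [hC']
    rw [Real.zero_rpow (by linarith), mul_zero]
  intro x hx
  -- the product agrees with an explicit power function near x
  have heq : (fun y => h y * caputo ν h y) =ᶠ[nhds x]
      (fun y => (C * C * Real.Gamma (ν + 2)) * y ^ (ν + 2)) := by
    filter_upwards [IsOpen.mem_nhds isOpen_Ioi hx] with y hy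
    rw [hcap y hy]
    simp only [hC']
    have hy' : (0:ℝ) < y := hy
    have hsplit : y ^ (ν + 2) = y ^ (ν + 1) * y := by
      rw [← Real.rpow_add_one hy'.ne']; ring_nf
    rw [hsplit]; ring
  have hd : HasDerivAt (fun y : ℝ => (C * C * Real.Gamma (ν + 2)) * y ^ (ν + 2))
      ((C * C * Real.Gamma (ν + 2)) * ((ν + 2) * x ^ (ν + 2 - 1))) x :=
    (Real.hasDerivAt_rpow_const (Or.inl hx.ne')).const_mul _
  rw [heq.deriv_eq, hd.deriv]
  have hG3 : Real.Gamma (ν + 3) = (ν + 2) * Real.Gamma (ν + 2) := by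
    rw [show ν + 3 = (ν + 2) + 1 by ring, Real.Gamma_add_one (by linarith)]
  simp only [hC']
  rw [hC]
  have hx1 : ν + 2 - 1 = ν + 1 := by ring
  rw [hx1, hG3]
  field_simp
end

section
/- Let k > 0, φ ≥ 6k. The function h(x,t) = φ x² / ( e^(φ t)(φ − 6k) + 6k ) satisfies h(x,0) = x², h(0,t) = 0, and ∂h/∂t = k ∂/∂x ( h ∂h/∂x ) − φ h for all x > 0, t > 0. -/
theorem unsteady_local_solution (k φ : ℝ) (hk : 0 < k) (hφ : 6 * k ≤ φ)
    (h : ℝ → ℝ → ℝ)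
    (hdef : h = fun x t => φ * x ^ 2 / (Real.exp (φ * t) * (φ - 6 * k) + 6 * k)) :
    (∀ x, h x 0 = x ^ 2) ∧ (∀ t, h 0 t = 0) ∧
      ∀ x > (0:ℝ), ∀ t > (0:ℝ),
        deriv (fun τ => h x τ) t
          = k * deriv (fun ξ => h ξ t * deriv (fun ξ' => h ξ' t) ξ) x - φ * h x t := by
  subst hdef
  have hk6 : (0:ℝ) < 6 * k := by linarith
  have hD : ∀ t : ℝ, 0 < Real.exp (φ * t) * (φ - 6 * k) + 6 * k := by
    intro t
    have h1 : 0 ≤ Real.exp (φ * t) * (φ - 6 * k) :=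
      mul_nonneg (Real.exp_pos _).le (by linarith)
    linarith
  refine ⟨?_, ?_, ?_⟩
  · intro x
    simp only [mul_zero, Real.exp_zero, one_mul]
    have : φ - 6 * k + 6 * k = φ := by ring
    rw [this]
    have hφ0 : φ ≠ 0 := ne_of_gt (by linarith)
    field_simp
  · intro t
    simp
  · intro x hx t ht
    set D : ℝ := Real.exp (φ * t) * (φ - 6 * k) + 6 * k with hDdef
    have hDpos : 0 < D := hD t
    have hDne : D ≠ 0 := ne_of_gt hDpos
    -- spatial inner derivative
    have hinner : ∀ ξ : ℝ, deriv (fun ξ' : ℝ => φ * ξ' ^ 2 / D) ξ = 2 * φ * ξ / D := by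
      intro ξ
      have : HasDerivAt (fun ξ' : ℝ => φ * ξ' ^ 2 / D) (2 * φ * ξ / D) ξ := by
        have h1 : HasDerivAt (fun ξ' : ℝ => ξ' ^ 2) (2 * ξ) ξ := by
          simpa using (hasDerivAt_pow 2 ξ)
        have := ((h1.const_mul φ).div_const D)
        refine this.congr_deriv ?_
        ring
      exact this.deriv
    have hfun : (fun ξ : ℝ => (φ * ξ ^ 2 / D) * deriv (fun ξ' : ℝ => φ * ξ' ^ 2 / D) ξ)
        = fun ξ : ℝ => 2 * φ ^ 2 * ξ ^ 3 / D ^ 2 := by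
      funext ξ
      rw [hinner ξ]
      field_simp
    have hspace : deriv (fun ξ : ℝ => 2 * φ ^ 2 * ξ ^ 3 / D ^ 2) x
        = 6 * φ ^ 2 * x ^ 2 / D ^ 2 := by
      have h1 : HasDerivAt (fun ξ : ℝ => ξ ^ 3) (3 * x ^ 2) x := by
        simpa using (hasDerivAt_pow 3 x)
      have h2 := ((h1.const_mul (2 * φ ^ 2)).div_const (D ^ 2))
      have h3 : HasDerivAt (fun ξ : ℝ => 2 * φ ^ 2 * ξ ^ 3 / D ^ 2)
          (6 * φ ^ 2 * x ^ 2 / D ^ 2) x := by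
        refine h2.congr_deriv ?_
        ring
      exact h3.deriv
    -- time derivative
    have htime : deriv (fun τ : ℝ => φ * x ^ 2 / (Real.exp (φ * τ) * (φ - 6 * k) + 6 * k)) t
        = -(φ * x ^ 2) * (φ * Real.exp (φ * t) * (φ - 6 * k)) / D ^ 2 := by
      have hE : HasDerivAt (fun τ : ℝ => Real.exp (φ * τ) * (φ - 6 * k) + 6 * k)
          (φ * Real.exp (φ * t) * (φ - 6 * k)) t := by
        have e1 : HasDerivAt (fun τ : ℝ => φ * τ) φ t := by
          simpa using (hasDerivAt_id t).const_mul φ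
        have e2 := (Real.hasDerivAt_exp (φ * t)).comp t e1
        have e3 := (e2.mul_const (φ - 6 * k)).add_const (6 * k)
        refine e3.congr_deriv ?_
        ring
      have hdiv : HasDerivAt (fun τ : ℝ => φ * x ^ 2 / (Real.exp (φ * τ) * (φ - 6 * k) + 6 * k))
          (-(φ * x ^ 2) * (φ * Real.exp (φ * t) * (φ - 6 * k)) / D ^ 2) t := by
        have := (hasDerivAt_const t (φ * x ^ 2)).div hE (by simpa [hDdef] using hDne)
        refine this.congr_deriv ?_
        rw [← hDdef]
        field_simp
        ring
      exact hdiv.deriv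
    simp only
    rw [htime, hfun, hspace]
    rw [hDdef]
    field_simp
    ring
end

section
/- Let k > 0. The function h(x,t) = x² / (1 − 6kt) satisfies h(x,0) = x², h(0,t)=0, and ∂h/∂t = k ∂/∂x(h ∂h/∂x) for all x > 0 and 0 ≤ t < 1/(6k). -/
theorem unsteady_local_solution_no_sink (k : ℝ) (hk : 0 < k)
    (h : ℝ → ℝ → ℝ) (hdef : h = fun x t => x ^ 2 / (1 - 6 * k * t)) :
    (∀ x, h x 0 = x ^ 2) ∧ (∀ t, h 0 t = 0) ∧
      ∀ x > (0:ℝ), ∀ t ∈ Set.Ico (0:ℝ) (1 / (6 * k)),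
        deriv (fun τ => h x τ) t
          = k * deriv (fun ξ => h ξ t * deriv (fun ξ' => h ξ' t) ξ) x := by
  subst hdef
  refine ⟨fun x => by simp, fun t => by simp, ?_⟩
  intro x hx t ht
  obtain ⟨ht0, ht1⟩ := ht
  have h6k : (0:ℝ) < 6 * k := by linarith
  have hc : (0:ℝ) < 1 - 6 * k * t := by
    have : t * (6 * k) < 1 := (lt_div_iff₀ h6k).mp ht1
    nlinarith
  have hcne : (1 - 6 * k * t) ≠ 0 := ne_of_gt hc
  -- LHS
  have hL : deriv (fun τ : ℝ => x ^ 2 / (1 - 6 * k * τ)) t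
      = x ^ 2 * (6 * k) / (1 - 6 * k * t) ^ 2 := by
    have hd : HasDerivAt (fun τ : ℝ => 1 - 6 * k * τ) (-(6 * k)) t := by
      simpa using ((hasDerivAt_id t).const_mul (6 * k)).const_sub 1
    have := ((hasDerivAt_const t (x ^ 2)).div hd hcne)
    rw [show (fun τ : ℝ => x ^ 2 / (1 - 6 * k * τ)) = (fun _ : ℝ => x ^ 2) / (fun τ : ℝ => 1 - 6 * k * τ) from rfl, this.deriv]
    field_simp
    ring
  -- inner x-derivative
  have hinner : ∀ ξ : ℝ, deriv (fun ξ' : ℝ => ξ' ^ 2 / (1 - 6 * k * t)) ξ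
      = 2 * ξ / (1 - 6 * k * t) := by
    intro ξ
    have : (fun ξ' : ℝ => ξ' ^ 2 / (1 - 6 * k * t)) = fun ξ' => ξ' ^ 2 * (1 - 6 * k * t)⁻¹ := by
      funext ξ'; rw [div_eq_mul_inv]
    rw [this, deriv_mul_const (by simpa using differentiableAt_pow 2)]
    field_simp
    simp
  have hR : deriv (fun ξ : ℝ => ξ ^ 2 / (1 - 6 * k * t) * deriv (fun ξ' : ℝ => ξ' ^ 2 / (1 - 6 * k * t)) ξ) x
      = 6 * x ^ 2 / (1 - 6 * k * t) ^ 2 := by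
    have heq : (fun ξ : ℝ => ξ ^ 2 / (1 - 6 * k * t) * deriv (fun ξ' : ℝ => ξ' ^ 2 / (1 - 6 * k * t)) ξ)
        = fun ξ => 2 / (1 - 6 * k * t) ^ 2 * ξ ^ 3 := by
      funext ξ; rw [hinner ξ]; field_simp
    rw [heq, deriv_const_mul _ (by simpa using differentiableAt_pow 3)]
    simp
    field_simp
    ring
  simp only [hL, hR]
  field_simp
end

section
/- Let k > 0, φ ≥ 0, ν ∈ (0,1). The function h(x,t) = x^(ν/2) e^(−φ t) satisfies h(x,0) = x^(ν/2), h(0,t)=0, and ∂h/∂t = k ∂/∂x ( h · ∂^ν h/∂x^ν ) − φ h for all x > 0, t > 0. -/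
lemma caputo_aux (ν c : ℝ) (hν : ν ∈ Set.Ioo (0:ℝ) 1) (z : ℝ) (hz : 0 < z) :
    (∫ s in (0:ℝ)..z, (z - s) ^ (-ν) * deriv (fun ξ : ℝ => ξ ^ (ν/2) * c) s)
      = ((ν/2) * c * ∫ u in (0:ℝ)..1, (1-u) ^ (-ν) * u ^ (ν/2-1)) * z ^ (-(ν/2)) := by
  obtain ⟨hν0, hν1⟩ := hν
  have key : (∫ s in (0:ℝ)..z, (z - s) ^ (-ν) * deriv (fun ξ : ℝ => ξ ^ (ν/2) * c) s)
      = ∫ s in (0:ℝ)..z, (z - s) ^ (-ν) * ((ν/2) * s ^ (ν/2-1) * c) := by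
    apply intervalIntegral.integral_congr_ae
    filter_upwards with s hs
    rw [Set.uIoc_of_le hz.le] at hs
    have hs0 : s ≠ 0 := hs.1.ne'
    congr 1
    rw [deriv_mul_const ((Real.differentiableAt_rpow_const_of_ne _ hs0)),
      Real.deriv_rpow_const]
  rw [key]
  have sub := intervalIntegral.smul_integral_comp_mul_left
    (f := fun s => (z - s) ^ (-ν) * ((ν/2) * s ^ (ν/2-1) * c)) (a := 0) (b := 1) z
  rw [mul_zero, mul_one] at sub
  rw [← sub]
  have congr2 : (∫ u in (0:ℝ)..1, (z - z*u) ^ (-ν) * ((ν/2) * (z*u) ^ (ν/2-1) * c))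
      = ∫ u in (0:ℝ)..1, (z ^ (-ν) * z ^ (ν/2-1) * ((ν/2) * c)) * ((1-u) ^ (-ν) * u ^ (ν/2-1)) := by
    apply intervalIntegral.integral_congr
    intro u hu
    rw [Set.uIcc_of_le (by norm_num)] at hu
    have hu0 : (0:ℝ) ≤ u := hu.1
    have hu1 : (0:ℝ) ≤ 1 - u := by linarith [hu.2]
    have e1 : z - z*u = z * (1-u) := by ring
    dsimp only
    rw [e1, Real.mul_rpow hz.le hu1, Real.mul_rpow hz.le hu0]
    ring
  rw [congr2, intervalIntegral.integral_const_mul, smul_eq_mul]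
  have hp : z * (z ^ (-ν) * z ^ (ν/2-1)) = z ^ (-(ν/2)) := by
    rw [← Real.rpow_add hz, mul_comm, ← Real.rpow_add_one hz.ne']
    congr 1; ring
  rw [← hp]; ring

theorem unsteady_space_fractional_solution (k φ ν : ℝ) (hk : 0 < k) (hφ : 0 ≤ φ)
    (hν : ν ∈ Set.Ioo (0:ℝ) 1)
    (h : ℝ → ℝ → ℝ) (hdef : h = fun x t => x ^ (ν / 2) * Real.exp (-φ * t)) :
    (∀ x, h x 0 = x ^ (ν / 2)) ∧ (∀ t, h 0 t = 0) ∧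
      ∀ x > (0:ℝ), ∀ t > (0:ℝ),
        deriv (fun τ => h x τ) t
          = k * deriv (fun ξ => h ξ t * caputo ν (fun ξ' => h ξ' t) ξ) x - φ * h x t := by
  subst hdef
  obtain ⟨hν0, hν1⟩ := hν
  refine ⟨fun x => by simp, fun t => by
    simp only []; rw [Real.zero_rpow (by positivity), zero_mul], ?_⟩
  intro x hx t ht
  beta_reduce
  set c := Real.exp (-φ * t) with hc
  -- time derivative
  have hexp : HasDerivAt (fun τ : ℝ => Real.exp (-φ * τ)) (Real.exp (-φ * t) * (-φ)) t := by
    simpa using ((hasDerivAt_id t).const_mul (-φ)).exp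
  have hlhs : deriv (fun τ => x ^ (ν/2) * Real.exp (-φ * τ)) t
      = x ^ (ν/2) * (Real.exp (-φ * t) * (-φ)) := (hexp.const_mul _).deriv
  -- space derivative is zero
  set B := ∫ u in (0:ℝ)..1, (1-u) ^ (-ν) * u ^ (ν/2-1) with hB
  set K := c * ((Real.Gamma (1-ν))⁻¹ * ((ν/2) * c * B)) with hK
  have hev : (fun ξ => ξ ^ (ν/2) * c * caputo ν (fun ξ' => ξ' ^ (ν/2) * c) ξ)
      =ᶠ[nhds x] (fun _ => K) := by
    filter_upwards [Ioi_mem_nhds hx] with ξ hξ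
    have hξ0 : (0:ℝ) < ξ := hξ
    unfold caputo
    rw [caputo_aux ν c ⟨hν0, hν1⟩ ξ hξ0]
    have hone : ξ ^ (ν/2) * ξ ^ (-(ν/2)) = 1 := by
      rw [← Real.rpow_add hξ0]; simp
    rw [hK]
    linear_combination (c * (Real.Gamma (1-ν))⁻¹ * ((ν/2) * c * B)) * hone
  have hrhs : deriv (fun ξ => ξ ^ (ν/2) * c * caputo ν (fun ξ' => ξ' ^ (ν/2) * c) ξ) x = 0 := by
    rw [hev.deriv_eq, deriv_const]
  simp only [hlhs, hrhs]
  ring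
end

section
/- For ν ∈ (0,1), the one-dimensional subspace spanned by w(x) = x^(ν/2) is invariant under the operator F[h] = k ∂/∂x ( h · ∂^ν h/∂x^ν ) − φ h; more precisely, for any scalar c, F[c·w] = −φ c · w. -/
open intervalIntegral MeasureTheory

lemma caputo_pow_aux (ν c : ℝ) (hν : ν ∈ Set.Ioo (0:ℝ) 1) :
    ∀ z > (0:ℝ), caputo ν (fun x => c * x ^ (ν/2)) z =
      ((Real.Gamma (1 - ν))⁻¹ * (c * (ν/2)) *
        ∫ t in (0:ℝ)..1, (1-t) ^ (-ν) * t ^ (ν/2-1)) * z ^ (-(ν/2)) := by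
  intro z hz
  have hz0 : z ≠ 0 := ne_of_gt hz
  unfold caputo
  have h1 : ∫ s in (0:ℝ)..z, (z - s) ^ (-ν) * deriv (fun x => c * x ^ (ν/2)) s
      = ∫ s in (0:ℝ)..z, (c * (ν/2)) * ((z - s) ^ (-ν) * s ^ (ν/2-1)) := by
    apply intervalIntegral.integral_congr_ae
    refine MeasureTheory.ae_of_all _ (fun s hs => ?_)
    rw [Set.uIoc_of_le hz.le] at hs
    have hd : deriv (fun x : ℝ => c * x ^ (ν/2)) s = c * ((ν/2) * s ^ (ν/2-1)) := by
      exact (((Real.hasDerivAt_rpow_const (Or.inl (ne_of_gt hs.1))).const_mul c)).deriv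
    rw [hd]; ring
  rw [h1, intervalIntegral.integral_const_mul]
  have h2 : ∫ s in (0:ℝ)..z, (z - s) ^ (-ν) * s ^ (ν/2-1)
      = z * ∫ t in (0:ℝ)..1, (z - z*t) ^ (-ν) * (z*t) ^ (ν/2-1) := by
    rw [intervalIntegral.integral_comp_mul_left (fun s => (z - s) ^ (-ν) * s ^ (ν/2-1)) hz0]
    rw [mul_zero, mul_one, smul_eq_mul, ← mul_assoc, mul_inv_cancel₀ hz0, one_mul]
  rw [h2]
  have h3 : ∫ t in (0:ℝ)..1, (z - z*t) ^ (-ν) * (z*t) ^ (ν/2-1)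
      = (z ^ (-ν) * z ^ (ν/2-1)) * ∫ t in (0:ℝ)..1, (1-t) ^ (-ν) * t ^ (ν/2-1) := by
    rw [← intervalIntegral.integral_const_mul]
    apply intervalIntegral.integral_congr
    intro t ht
    rw [Set.uIcc_of_le (by norm_num : (0:ℝ) ≤ 1)] at ht
    have h1t : (0:ℝ) ≤ 1 - t := by linarith [ht.2]
    dsimp only
    have : z - z*t = z * (1-t) := by ring
    rw [this, Real.mul_rpow hz.le h1t, Real.mul_rpow hz.le ht.1]
    ring
  rw [h3]
  have h4 : z * (z ^ (-ν) * z ^ (ν/2-1)) = z ^ (-(ν/2)) := by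
    nth_rewrite 1 [← Real.rpow_one z]
    rw [← Real.rpow_add hz, ← Real.rpow_add hz]
    congr 1; ring
  calc (Real.Gamma (1 - ν))⁻¹ * (c * (ν/2) * (z * (z ^ (-ν) * z ^ (ν/2-1) *
          ∫ t in (0:ℝ)..1, (1-t) ^ (-ν) * t ^ (ν/2-1))))
      = (Real.Gamma (1 - ν))⁻¹ * (c * (ν/2)) * (∫ t in (0:ℝ)..1, (1-t) ^ (-ν) * t ^ (ν/2-1))
        * (z * (z ^ (-ν) * z ^ (ν/2-1))) := by ring
    _ = _ := by rw [h4]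

theorem invariant_subspace_one_dim (k φ ν : ℝ) (hν : ν ∈ Set.Ioo (0:ℝ) 1)
    (F : (ℝ → ℝ) → ℝ → ℝ)
    (hF : F = fun h x => k * deriv (fun ξ => h ξ * caputo ν h ξ) x - φ * h x)
    (w : ℝ → ℝ) (hw : w = fun x => x ^ (ν / 2)) :
    ∀ c : ℝ, ∀ x > (0:ℝ), F (fun x => c * w x) x = -φ * c * w x := by
  intro c x hx
  subst hF hw
  set A : ℝ := (Real.Gamma (1 - ν))⁻¹ * (c * (ν/2)) *
        ∫ t in (0:ℝ)..1, (1-t) ^ (-ν) * t ^ (ν/2-1) with hA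
  have hconst : ∀ z > (0:ℝ),
      (c * z ^ (ν/2)) * caputo ν (fun x => c * x ^ (ν/2)) z = c * A := by
    intro z hz
    rw [caputo_pow_aux ν c hν z hz, ← hA]
    have : z ^ (ν/2) * z ^ (-(ν/2)) = 1 := by
      rw [← Real.rpow_add hz]; simp
    calc (c * z ^ (ν/2)) * (A * z ^ (-(ν/2)))
        = c * A * (z ^ (ν/2) * z ^ (-(ν/2))) := by ring
      _ = c * A := by rw [this, mul_one]
  have hderiv : deriv (fun ξ => (c * ξ ^ (ν/2)) * caputo ν (fun x => c * x ^ (ν/2)) ξ) x = 0 := by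
    have hev : (fun ξ => (c * ξ ^ (ν/2)) * caputo ν (fun x => c * x ^ (ν/2)) ξ)
        =ᶠ[nhds x] (fun _ => c * A) := by
      filter_upwards [isOpen_Ioi.mem_nhds hx] with z hz
      exact hconst z hz
    rw [hev.deriv_eq, deriv_const]
  simp only
  rw [hderiv]
  ring
end

section
/- For ν ∈ (0,1) and scalars c₁, c₂, the operator F[h] = k ∂/∂x ( h · ∂^ν h/∂x^ν ) − φ h maps h(x) = c₁ x^(ν+1) + c₂ to F[h](x) = ( k Γ(ν+3) c₁² − φ c₁ ) x^(ν+1) + ( k Γ(ν+2) c₁ c₂ − φ c₂ ); in particular the subspace spanned by { x^(ν+1), 1 } is invariant under F. -/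
lemma beta_key {ν : ℝ} (hν : ν ∈ Set.Ioo (0:ℝ) 1) {z : ℝ} (hz : 0 < z) :
    ∫ s in (0:ℝ)..z, (z - s) ^ (-ν) * s ^ ν
      = z * (Real.Gamma (ν + 1) * Real.Gamma (1 - ν)) := by
  obtain ⟨hν0, hν1⟩ := hν
  have hs : (0:ℝ) < (ν + 1) := by linarith
  have ht : (0:ℝ) < (1 - ν) := by linarith
  have hbeta := Complex.Gamma_mul_Gamma_eq_betaIntegral
    (s := (ν:ℂ) + 1) (t := 1 - (ν:ℂ)) (by simpa using hs) (by simp [Complex.sub_re]; linarith)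
  have hscaled := Complex.betaIntegral_scaled ((ν:ℂ) + 1) (1 - (ν:ℂ)) hz
  have hcast : (∫ x in (0:ℝ)..z, (x : ℂ) ^ ((ν:ℂ) + 1 - 1) * ((z : ℂ) - x) ^ ((1 - (ν:ℂ)) - 1))
      = ((∫ s in (0:ℝ)..z, (z - s) ^ (-ν) * s ^ ν : ℝ) : ℂ) := by
    rw [← intervalIntegral.integral_ofReal]
    apply intervalIntegral.integral_congr
    intro x hx
    rw [Set.uIcc_of_le hz.le] at hx
    have hx0 : 0 ≤ x := hx.1
    have hxz : 0 ≤ z - x := by linarith [hx.2]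
    have e1 : (ν:ℂ) + 1 - 1 = ((ν:ℝ):ℂ) := by ring
    have e2 : 1 - (ν:ℂ) - 1 = ((-ν:ℝ):ℂ) := by push_cast; ring
    have e3 : ((z:ℂ) - (x:ℂ)) = (((z - x : ℝ)):ℂ) := by push_cast; ring
    simp only [e1, e2, e3, ← Complex.ofReal_cpow hx0, ← Complex.ofReal_cpow hxz,
      Complex.ofReal_mul]
    ring
  have hsum : (ν:ℂ) + 1 + (1 - (ν:ℂ)) = 2 := by ring
  rw [hsum] at hbeta
  have hG2 : Complex.Gamma 2 = 1 := by
    have := Complex.Gamma_nat_eq_factorial 1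
    norm_num at this
    simpa using this
  rw [hG2, one_mul] at hbeta
  rw [hcast, hsum] at hscaled
  rw [← hbeta] at hscaled
  have : ((∫ s in (0:ℝ)..z, (z - s) ^ (-ν) * s ^ ν : ℝ) : ℂ)
      = ((z * (Real.Gamma (ν + 1) * Real.Gamma (1 - ν)) : ℝ) : ℂ) := by
    rw [hscaled]
    have : ((2:ℂ) - 1) = 1 := by ring
    rw [this, Complex.cpow_one]
    have g1 : Complex.Gamma ((ν:ℂ) + 1) = (Real.Gamma (ν + 1) : ℂ) := by
      rw [← Complex.Gamma_ofReal]; push_cast; ring_nf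
    have g2 : Complex.Gamma (1 - (ν:ℂ)) = (Real.Gamma (1 - ν) : ℂ) := by
      rw [← Complex.Gamma_ofReal]; push_cast; ring_nf
    rw [g1, g2]; push_cast; ring
  exact_mod_cast this

lemma deriv_h (ν : ℝ) (hν0 : 0 < ν) (c₁ c₂ : ℝ) (s : ℝ) :
    deriv (fun x : ℝ => c₁ * x ^ (ν + 1) + c₂) s = c₁ * ((ν + 1) * s ^ ν) := by
  have h1 : HasDerivAt (fun x : ℝ => x ^ (ν + 1)) ((ν + 1) * s ^ (ν + 1 - 1)) s :=
    Real.hasDerivAt_rpow_const (Or.inr (by linarith))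
  have h2 : HasDerivAt (fun x : ℝ => c₁ * x ^ (ν + 1) + c₂)
      (c₁ * ((ν + 1) * s ^ (ν + 1 - 1))) s := by
    simpa using (h1.const_mul c₁).add_const c₂
  simpa using h2.deriv

lemma caputo_eval {ν : ℝ} (hν : ν ∈ Set.Ioo (0:ℝ) 1) (c₁ c₂ : ℝ) {z : ℝ} (hz : 0 < z) :
    caputo ν (fun x => c₁ * x ^ (ν + 1) + c₂) z = c₁ * Real.Gamma (ν + 2) * z := by
  have hG : Real.Gamma (1 - ν) ≠ 0 := (Real.Gamma_pos_of_pos (by linarith [hν.2])).ne'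
  rw [caputo]
  have : (∫ s in (0:ℝ)..z, (z - s) ^ (-ν) * deriv (fun x : ℝ => c₁ * x ^ (ν + 1) + c₂) s)
      = c₁ * (ν + 1) * ∫ s in (0:ℝ)..z, (z - s) ^ (-ν) * s ^ ν := by
    rw [← intervalIntegral.integral_const_mul]
    apply intervalIntegral.integral_congr
    intro s _
    simp only [deriv_h ν hν.1 c₁ c₂]
    ring
  rw [this, beta_key hν hz]
  have hG2 : Real.Gamma (ν + 2) = (ν + 1) * Real.Gamma (ν + 1) := by
    have := Real.Gamma_add_one (s := ν + 1) (by nlinarith [hν.1])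
    rw [show ν + 1 + 1 = ν + 2 by ring] at this
    exact this
  field_simp [hG2]
  rw [hG2]; ring

theorem invariant_subspace_two_dim (k φ ν : ℝ) (hν : ν ∈ Set.Ioo (0:ℝ) 1)
    (F : (ℝ → ℝ) → ℝ → ℝ)
    (hF : F = fun h x => k * deriv (fun ξ => h ξ * caputo ν h ξ) x - φ * h x)
    (c₁ c₂ : ℝ) :
    ∀ x > (0:ℝ),
      F (fun x => c₁ * x ^ (ν + 1) + c₂) x
        = (k * Real.Gamma (ν + 3) * c₁ ^ 2 - φ * c₁) * x ^ (ν + 1)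
            + (k * Real.Gamma (ν + 2) * c₁ * c₂ - φ * c₂) := by
  intro x hx
  subst hF
  simp only
  set G := Real.Gamma (ν + 2) with hGdef
  have heq : (fun ξ => (c₁ * ξ ^ (ν + 1) + c₂) * caputo ν (fun x => c₁ * x ^ (ν + 1) + c₂) ξ)
      =ᶠ[nhds x] (fun ξ => (c₁ * ξ ^ (ν + 1) + c₂) * (c₁ * G * ξ)) := by
    filter_upwards [IsOpen.mem_nhds isOpen_Ioi hx] with ξ hξ
    rw [caputo_eval hν c₁ c₂ hξ]
  rw [heq.deriv_eq]
  have h1 : HasDerivAt (fun ξ : ℝ => c₁ * ξ ^ (ν + 1) + c₂) (c₁ * ((ν + 1) * x ^ ν)) x := by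
    have := Real.hasDerivAt_rpow_const (x := x) (p := ν + 1) (Or.inr (by linarith [hν.1]))
    simpa using (this.const_mul c₁).add_const c₂
  have h2 : HasDerivAt (fun ξ : ℝ => c₁ * G * ξ) (c₁ * G) x := by
    simpa using (hasDerivAt_id x).const_mul (c₁ * G)
  have h3 := (h1.mul h2).deriv
  simp only [Pi.mul_def] at h3
  rw [h3]
  have hxν : x ^ (ν + 1) = x ^ ν * x := by
    rw [Real.rpow_add hx, Real.rpow_one]
  have hG3 : Real.Gamma (ν + 3) = (ν + 2) * G := by
    have := Real.Gamma_add_one (s := ν + 2) (by nlinarith [hν.1])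
    rw [show ν + 2 + 1 = ν + 3 by ring] at this
    exact this
  rw [hG3, hxν]
  ring
end

section
/- For γ ∈ (0,1) and φ > 0, the Mittag-Leffler function y(t) = E_γ(−φ t^γ) = Σ_{i≥0} (−φ t^γ)^i / Γ(γ i + 1) satisfies y(0) = 1 and the Caputo fractional differential equation d^γ y/dt^γ = −φ y for t > 0. -/
open Real MeasureTheory intervalIntegral Set

lemma gamma_lower {γ s : ℝ} (hγ0 : 0 < γ) (hγ1 : γ < 1) (hs : 1 ≤ s) :
    Real.Gamma s * (s + γ - 1) ^ γ ≤ Real.Gamma (s + γ) := by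
  have h1 : (0:ℝ) < s + γ - 1 := by linarith
  have h2 : (0:ℝ) < s := by linarith
  have h3 : (0:ℝ) < s + γ := by linarith
  have key := Real.convexOn_log_Gamma.2 (Set.mem_Ioi.2 h1) (Set.mem_Ioi.2 h3)
    hγ0.le (by linarith : (0:ℝ) ≤ 1 - γ) (by ring)
  have harg : γ • (s + γ - 1) + (1 - γ) • (s + γ) = s := by
    simp only [smul_eq_mul]; ring
  rw [harg] at key
  simp only [Function.comp_apply] at key
  have hrec : Real.Gamma (s + γ) = (s + γ - 1) * Real.Gamma (s + γ - 1) := by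
    have h := Real.Gamma_add_one (ne_of_gt h1)
    rw [show s + γ - 1 + 1 = s + γ by ring] at h
    exact h
  have hΓ1 : 0 < Real.Gamma (s + γ - 1) := Real.Gamma_pos_of_pos h1
  have hΓ2 : 0 < Real.Gamma (s + γ) := Real.Gamma_pos_of_pos h3
  have hΓ3 : 0 < Real.Gamma s := Real.Gamma_pos_of_pos h2
  have hlog : Real.log (Real.Gamma (s + γ)) =
      Real.log (s + γ - 1) + Real.log (Real.Gamma (s + γ - 1)) := by
    rw [hrec, Real.log_mul (ne_of_gt h1) (ne_of_gt hΓ1)]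
  simp only [smul_eq_mul] at key
  have h4 : γ * Real.log (Real.Gamma (s + γ - 1)) =
      γ * Real.log (Real.Gamma (s + γ)) - γ * Real.log (s + γ - 1) := by
    rw [hlog]; ring
  have key2 : Real.log (Real.Gamma s) + γ * Real.log (s + γ - 1) ≤
      Real.log (Real.Gamma (s + γ)) := by linarith [key, h4]
  calc Real.Gamma s * (s + γ - 1) ^ γ
      = Real.exp (Real.log (Real.Gamma s) + γ * Real.log (s + γ - 1)) := by
        rw [Real.exp_add, Real.exp_log hΓ3, Real.rpow_def_of_pos h1]
        ring_nf
    _ ≤ Real.exp (Real.log (Real.Gamma (s + γ))) := Real.exp_le_exp.2 key2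
    _ = Real.Gamma (s + γ) := Real.exp_log hΓ2

lemma summable_ml {γ : ℝ} (hγ0 : 0 < γ) (hγ1 : γ < 1) {x : ℝ} (hx : 0 ≤ x) :
    Summable (fun i : ℕ => ((i:ℝ) + 1) * x ^ i / Real.Gamma (γ * i + 1)) := by
  rcases eq_or_lt_of_le hx with h0 | hx
  · apply summable_of_ne_finset_zero (s := {0})
    intro i hi
    have : i ≠ 0 := by simpa using hi
    simp [← h0, zero_pow this]
  -- ratio test
  have hG : ∀ i : ℕ, 0 < Real.Gamma (γ * i + 1) := fun i =>
    Real.Gamma_pos_of_pos (by positivity)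
  have hf : ∀ i : ℕ, 0 < ((i:ℝ) + 1) * x ^ i / Real.Gamma (γ * i + 1) := by
    intro i
    have := pow_pos hx i
    positivity
  refine summable_of_ratio_norm_eventually_le (r := 1/2) (by norm_num) ?_
  -- choose N with γ * (N + 1) ≥ max 1 ((4*x) ^ (1/γ))
  obtain ⟨N, hN⟩ := exists_nat_ge ((max 1 ((4*x) ^ (1/γ))) / γ)
  filter_upwards [Filter.eventually_ge_atTop N] with i hi
  have hx4 : (0:ℝ) < 4 * x := by linarith
  have hMi : max 1 ((4*x) ^ (1/γ)) ≤ γ * (i + 1) := by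
    have h1 : (max 1 ((4*x) ^ (1/γ))) / γ ≤ (i:ℝ) := le_trans hN (by exact_mod_cast hi)
    rw [div_le_iff₀ hγ0] at h1
    nlinarith [le_max_left (1:ℝ) ((4*x) ^ (1/γ))]
  have hkey : 4 * x ≤ (γ * (i+1)) ^ γ := by
    have h2 : ((4*x) ^ (1/γ)) ^ γ ≤ (γ * (i+1)) ^ γ := by
      apply Real.rpow_le_rpow (Real.rpow_nonneg hx4.le _)
        (le_trans (le_max_right _ _) hMi) hγ0.le
    rwa [← Real.rpow_mul hx4.le, one_div_mul_cancel (ne_of_gt hγ0), Real.rpow_one] at h2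
  -- gamma growth
  have hgl := gamma_lower hγ0 hγ1 (s := γ * i + 1)
    (le_add_of_nonneg_left (by positivity))
  have harg : γ * i + 1 + γ - 1 = γ * (i + 1) := by ring
  have harg2 : γ * i + 1 + γ = γ * (i+1) + 1 := by ring
  rw [harg, harg2] at hgl
  have hB : Real.Gamma (γ * i + 1) * (4 * x) ≤ Real.Gamma (γ * (i+1) + 1) := by
    calc Real.Gamma (γ * i + 1) * (4 * x)
        ≤ Real.Gamma (γ * i + 1) * (γ * (i+1)) ^ γ :=
          mul_le_mul_of_nonneg_left hkey (hG i).le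
      _ ≤ _ := hgl
  rw [Real.norm_of_nonneg (hf _).le, Real.norm_of_nonneg (hf _).le]
  have hGi := hG i
  have hGi1 : 0 < Real.Gamma (γ * ((i:ℝ)+1) + 1) := Real.Gamma_pos_of_pos (by positivity)
  push_cast
  rw [div_le_iff₀ hGi1]
  have hxi : (0:ℝ) < x ^ i := pow_pos hx i
  calc ((i:ℝ) + 1 + 1) * x ^ (i+1)
      ≤ (2 * ((i:ℝ)+1)) * (x ^ i * x) := by
        rw [pow_succ]
        nlinarith [mul_nonneg (mul_nonneg ((Nat.cast_nonneg i : (0:ℝ) ≤ i)) hxi.le) hx.le]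
    _ = (1/2) * (((i:ℝ)+1) * x ^ i) * (4 * x) := by ring
    _ ≤ (1/2) * (((i:ℝ)+1) * x ^ i) * (Real.Gamma (γ * ((i:ℝ)+1) + 1) / Real.Gamma (γ * i + 1)) := by
        apply mul_le_mul_of_nonneg_left _ (by positivity)
        rw [le_div_iff₀ hGi]
        linarith [hB]
    _ = 1/2 * (((i:ℝ) + 1) * x ^ i / Real.Gamma (γ * ↑i + 1)) * Real.Gamma (γ * (↑i+1) + 1) := by
        field_simp

lemma beta_integrable {a b t : ℝ} (ha : 0 < a) (hb : 0 < b) (ht : 0 < t) :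
    IntervalIntegrable (fun s => s ^ (a - 1) * (t - s) ^ (b - 1)) volume 0 t := by
  have h2 : (0:ℝ) < t/2 := by linarith
  have part1 : IntervalIntegrable (fun s => s ^ (a - 1) * (t - s) ^ (b - 1)) volume 0 (t/2) := by
    apply IntervalIntegrable.mul_continuousOn
    · exact intervalIntegrable_rpow' (by linarith)
    · apply ContinuousOn.rpow_const (by fun_prop)
      intro x hx
      rw [Set.uIcc_of_le (by linarith : (0:ℝ) ≤ t/2)] at hx
      left
      have := hx.2
      intro h; linarith [sub_eq_zero.mp h]
  have part2 : IntervalIntegrable (fun s => s ^ (a - 1) * (t - s) ^ (b - 1)) volume (t/2) t := by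
    apply IntervalIntegrable.continuousOn_mul
    · -- integrability of (t - s) ^ (b-1) on t/2 .. t
      have base : IntervalIntegrable (fun s : ℝ => s ^ (b - 1)) volume 0 (t/2) :=
        intervalIntegrable_rpow' (by linarith)
      have h3 := (base.comp_sub_left t).symm
      rw [show t - t / 2 = t / 2 by ring] at h3
      simpa using h3
    · apply ContinuousOn.rpow_const (by fun_prop)
      intro x hx
      rw [Set.uIcc_of_le (by linarith : t/2 ≤ t)] at hx
      left
      have := hx.1
      intro h; rw [h] at this; linarith
  exact part1.trans part2

lemma beta_scaled {a b t : ℝ} (ha : 0 < a) (hb : 0 < b) (ht : 0 < t) :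
    ∫ s in (0:ℝ)..t, s ^ (a - 1) * (t - s) ^ (b - 1) =
      t ^ (a + b - 1) * (Real.Gamma a * Real.Gamma b / Real.Gamma (a + b)) := by
  have key : ∫ s in (0:ℝ)..t, ((s ^ (a-1) * (t-s) ^ (b-1) : ℝ) : ℂ)
      = (t:ℂ) ^ ((a:ℂ) + b - 1) * Complex.betaIntegral a b := by
    rw [← Complex.betaIntegral_scaled (a:ℂ) (b:ℂ) ht]
    refine intervalIntegral.integral_congr fun x hx => ?_
    rw [Set.uIcc_of_le ht.le] at hx
    rw [Complex.ofReal_mul, Complex.ofReal_cpow hx.1,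
      Complex.ofReal_cpow (by linarith [hx.2] : (0:ℝ) ≤ t - x)]
    push_cast
    ring
  rw [intervalIntegral.integral_ofReal] at key
  have hbeta : Complex.betaIntegral a b =
      ((Real.Gamma a * Real.Gamma b / Real.Gamma (a + b) : ℝ) : ℂ) := by
    have h := Complex.Gamma_mul_Gamma_eq_betaIntegral
      (s := (a:ℂ)) (t := (b:ℂ)) (by simpa using ha) (by simpa using hb)
    have hab : Complex.Gamma ((a:ℂ) + b) ≠ 0 := by
      rw [show ((a:ℂ) + b) = ((a + b : ℝ) : ℂ) by push_cast; ring, Complex.Gamma_ofReal]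
      simpa using (Real.Gamma_pos_of_pos (by linarith)).ne'
    rw [show ((a:ℂ) + b) = ((a + b : ℝ) : ℂ) by push_cast; ring] at h
    rw [Complex.Gamma_ofReal, Complex.Gamma_ofReal, Complex.Gamma_ofReal] at h
    have hab' : ((Real.Gamma (a+b) : ℝ) : ℂ) ≠ 0 := by
      exact_mod_cast (Real.Gamma_pos_of_pos (by linarith : (0:ℝ) < a+b)).ne'
    push_cast
    rw [eq_div_iff hab']
    linear_combination -h
  rw [hbeta, show ((a:ℂ) + b - 1) = ((a + b - 1 : ℝ) : ℂ) by push_cast; ring,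
    ← Complex.ofReal_cpow ht.le] at key
  exact_mod_cast key

lemma hasDerivAt_tsum_pow {a : ℕ → ℝ}
    (hsum : ∀ R : ℝ, 0 ≤ R → Summable (fun i : ℕ => |a i| * ((i:ℝ) + 1) * R ^ i)) (u : ℝ) :
    HasDerivAt (fun z : ℝ => ∑' i, a i * z ^ i) (∑' i, a i * ((i:ℝ) * u ^ (i - 1))) u := by
  set R : ℝ := |u| + 1 with hR
  have hR0 : 0 < R := by positivity
  have hR1 : 1 ≤ R := by
    have := abs_nonneg u
    simp only [hR]; linarith
  refine hasDerivAt_tsum_of_isPreconnected (y₀ := (0:ℝ)) (hsum R hR0.le) isOpen_Ioo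
    (isPreconnected_Ioo (a := -R) (b := R))
    (fun n y _ => (hasDerivAt_pow n y).const_mul (a n))
    ?_ ?_ ?_ ?_
  · intro n y hy
    have hyR : |y| ≤ R := by
      rw [abs_le]
      exact ⟨hy.1.le, hy.2.le⟩
    rw [norm_mul, norm_mul, Real.norm_natCast]
    rw [Real.norm_eq_abs (a n), Real.norm_eq_abs]
    calc |a n| * ((n:ℝ) * |y ^ (n-1)|)
        ≤ |a n| * (((n:ℝ) + 1) * R ^ n) := by
          apply mul_le_mul_of_nonneg_left _ (abs_nonneg _)
          rw [abs_pow]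
          have h1 : |y| ^ (n-1) ≤ R ^ (n-1) := pow_le_pow_left₀ (abs_nonneg y) hyR _
          have h2 : R ^ (n-1) ≤ R ^ n := pow_le_pow_right₀ hR1 (Nat.sub_le n 1)
          have h3 : (n:ℝ) ≤ (n:ℝ) + 1 := by linarith
          have h4 : (0:ℝ) ≤ |y| ^ (n-1) := by positivity
          nlinarith [pow_nonneg hR0.le n, Nat.cast_nonneg (α := ℝ) n]
      _ = |a n| * ((n:ℝ) + 1) * R ^ n := by ring
  · rw [Set.mem_Ioo]
    constructor <;> [linarith [neg_abs_le u]; linarith [le_abs_self u]]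
  · apply summable_of_ne_finset_zero (s := {0})
    intro i hi
    have : i ≠ 0 := by simpa using hi
    simp [zero_pow this]
  · rw [Set.mem_Ioo]
    constructor <;> [linarith [neg_abs_le u]; linarith [le_abs_self u]]

/-- One-parameter Mittag-Leffler function evaluated at `-φ * t ^ γ`. -/
noncomputable def mittagLeffler (γ φ t : ℝ) : ℝ :=
  ∑' i : ℕ, (-φ * t ^ γ) ^ i / Real.Gamma (γ * i + 1)

theorem mittagLeffler_solves_caputo_ode (γ φ : ℝ) (hγ : γ ∈ Set.Ioo (0:ℝ) 1)
    (hφ : 0 < φ) (y : ℝ → ℝ) (hy : y = fun t => mittagLeffler γ φ t) :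
    y 0 = 1 ∧ ∀ t > (0:ℝ), caputo γ y t = -φ * y t := by
  obtain ⟨hγ0, hγ1⟩ := hγ
  set a : ℕ → ℝ := fun i => (-φ) ^ i / Real.Gamma (γ * i + 1) with ha
  have hΓpos : ∀ i : ℕ, 0 < Real.Gamma (γ * i + 1) := fun i =>
    Real.Gamma_pos_of_pos (by positivity)
  have hsuma : ∀ R : ℝ, 0 ≤ R → Summable (fun i : ℕ => |a i| * ((i:ℝ) + 1) * R ^ i) := by
    intro R hR
    have := summable_ml hγ0 hγ1 (mul_nonneg hφ.le hR)
    refine this.congr fun i => ?_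
    rw [ha]
    rw [abs_div, abs_pow, abs_neg, abs_of_pos hφ, abs_of_pos (hΓpos i), mul_pow]
    ring
  -- the series as a function of u = t ^ γ
  set g : ℝ → ℝ := fun z => ∑' i, a i * z ^ i with hgdef
  have hg : ∀ u : ℝ, HasDerivAt g (∑' i, a i * ((i:ℝ) * u ^ (i - 1))) u := fun u =>
    hasDerivAt_tsum_pow hsuma u
  have hyg : y = fun t => g (t ^ γ) := by
    rw [hy]
    funext t
    rw [hgdef]
    simp only [mittagLeffler]
    refine tsum_congr fun i => ?_
    rw [ha, mul_pow]
    ring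
  constructor
  · -- y 0 = 1
    rw [hyg]
    simp only
    rw [Real.zero_rpow (ne_of_gt hγ0), hgdef]
    simp only
    rw [tsum_eq_single 0 (by intro i hi; simp [zero_pow hi])]
    norm_num [ha, Real.Gamma_one]
  intro t ht
  have hγ1' : (0:ℝ) < 1 - γ := by linarith
  set c : ℕ → ℝ := fun i => a i * (γ * i) with hc
  -- derivative of y at positive points
  have hderiv : ∀ s : ℝ, 0 < s → deriv y s = ∑' i, c i * s ^ (γ * i - 1) := by
    intro s hs
    have hrp : HasDerivAt (fun x : ℝ => x ^ γ) (γ * s ^ (γ - 1)) s :=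
      Real.hasDerivAt_rpow_const (Or.inl (ne_of_gt hs))
    have hcomp : HasDerivAt y
        ((∑' i, a i * ((i:ℝ) * (s ^ γ) ^ (i - 1))) * (γ * s ^ (γ - 1))) s := by
      rw [hyg]
      exact (hg (s ^ γ)).comp s hrp
    rw [hcomp.deriv, ← tsum_mul_right]
    refine tsum_congr fun i => ?_
    rcases Nat.eq_zero_or_pos i with h0 | hpos
    · subst h0; simp [hc]
    · obtain ⟨k, rfl⟩ := Nat.exists_eq_add_of_le hpos
      have e1 : (s ^ γ) ^ (1 + k - 1) = s ^ (γ * k) := by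
        rw [show 1 + k - 1 = k by omega, ← Real.rpow_natCast (s ^ γ) k,
          ← Real.rpow_mul hs.le]
      rw [e1, hc]
      rw [show a (1+k) * ((↑(1+k):ℝ) * s ^ (γ * k)) * (γ * s ^ (γ - 1))
          = a (1+k) * (γ * (↑(1+k):ℝ)) * (s ^ (γ * k) * s ^ (γ - 1)) by ring,
        ← Real.rpow_add hs]
      congr 2
      push_cast
      ring
  -- the summands under the integral sign
  set G : ℕ → ℝ → ℝ := fun i s => c i * (s ^ (γ * i - 1) * (t - s) ^ (-γ)) with hG
  have hcast : ∀ k : ℕ, (0:ℝ) < γ * (k+1 : ℕ) :=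
    fun k => mul_pos hγ0 (by exact_mod_cast k.succ_pos)
  have hIcc : ∀ k : ℕ, IntervalIntegrable
      (fun s => s ^ (γ * (k+1 : ℕ) - 1) * (t - s) ^ (-γ)) volume 0 t := by
    intro k
    have h := beta_integrable (a := (γ * (k+1 : ℕ) : ℝ)) (b := 1 - γ) (hcast k) hγ1' ht
    rwa [show (1:ℝ) - γ - 1 = -γ by ring] at h
  have hbetaval : ∀ k : ℕ, ∫ s in Set.Ioc (0:ℝ) t, s ^ (γ * (k+1 : ℕ) - 1) * (t - s) ^ (-γ)
      = (t ^ γ) ^ k * (Real.Gamma (γ * (k+1 : ℕ)) * Real.Gamma (1-γ) / Real.Gamma (γ * k + 1)) := by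
    intro k
    have h := beta_scaled (a := (γ * (k+1 : ℕ) : ℝ)) (b := 1 - γ) (hcast k) hγ1' ht
    rw [show (1:ℝ) - γ - 1 = -γ by ring] at h
    rw [← intervalIntegral.integral_of_le ht.le, h,
      show (γ * (k+1 : ℕ) + (1 - γ) - 1 : ℝ) = γ * k by push_cast; ring,
      show (γ * (k+1 : ℕ) + (1 - γ) : ℝ) = γ * k + 1 by push_cast; ring,
      ← Real.rpow_natCast (t ^ γ) k, ← Real.rpow_mul ht.le]
  have hGint : ∀ i : ℕ, Integrable (G i) (volume.restrict (Set.Ioc 0 t)) := by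
    intro i
    rcases Nat.eq_zero_or_pos i with h0 | hpos
    · subst h0
      have hz : G 0 = fun _ => 0 := by funext s; simp [hG, hc]
      rw [hz]
      exact integrable_zero _ _ _
    · obtain ⟨k, rfl⟩ := Nat.exists_eq_succ_of_ne_zero hpos.ne'
      have h := (intervalIntegrable_iff_integrableOn_Ioc_of_le ht.le).1 (hIcc k)
      exact h.const_mul (c (k+1))
  -- norm integrals
  set w : ℕ → ℝ := fun i => ∫ s in Set.Ioc (0:ℝ) t, ‖G i s‖ with hw
  set e : ℕ → ℝ := fun i => ∫ s in Set.Ioc (0:ℝ) t, G i s with he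
  have hnorm : ∀ i : ℕ, w i = |c i| * ∫ s in Set.Ioc (0:ℝ) t, s ^ (γ * i - 1) * (t - s) ^ (-γ) := by
    intro i
    rw [hw, ← MeasureTheory.integral_const_mul]
    refine MeasureTheory.setIntegral_congr_fun measurableSet_Ioc fun s hs => ?_
    have hA : 0 ≤ s ^ (γ * i - 1) := Real.rpow_nonneg hs.1.le _
    have hB : 0 ≤ (t - s) ^ (-γ) := Real.rpow_nonneg (by linarith [hs.2]) _
    rw [hG]
    simp only
    rw [norm_mul, Real.norm_eq_abs, Real.norm_eq_abs, abs_of_nonneg (mul_nonneg hA hB)]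
  have hγk1 : ∀ k : ℕ, (γ * (k+1:ℕ) : ℝ) ≠ 0 := fun k => (hcast k).ne'
  have hGaddk : ∀ k : ℕ, Real.Gamma (γ * (k+1:ℕ) + 1)
      = γ * (k+1:ℕ) * Real.Gamma (γ * (k+1:ℕ)) := fun k => Real.Gamma_add_one (hγk1 k)
  have hcoef : ∀ k : ℕ, c (k+1) * Real.Gamma (γ * (k+1:ℕ)) = (-φ) ^ (k+1) := by
    intro k
    rw [hc, ha]
    simp only
    rw [div_mul_eq_mul_div, div_mul_eq_mul_div, div_eq_iff (Real.Gamma_pos_of_pos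
      (by positivity : (0:ℝ) < γ * ((k+1:ℕ):ℝ) + 1)).ne', hGaddk k]
    ring
  have habscoef : ∀ k : ℕ, |c (k+1)| * Real.Gamma (γ * (k+1:ℕ)) = φ ^ (k+1) := by
    intro k
    have hΓ : 0 < Real.Gamma (γ * (k+1:ℕ)) := Real.Gamma_pos_of_pos (hcast k)
    have := congrArg abs (hcoef k)
    rw [abs_mul, abs_of_pos hΓ, abs_pow, abs_neg, abs_of_pos hφ] at this
    exact this
  have hwval : ∀ k : ℕ, w (k+1)
      = φ ^ (k+1) * ((t ^ γ) ^ k * Real.Gamma (1-γ) / Real.Gamma (γ * k + 1)) := by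
    intro k
    rw [hnorm (k+1), hbetaval k]
    have hΓ : 0 < Real.Gamma (γ * (k+1:ℕ)) := Real.Gamma_pos_of_pos (hcast k)
    have h2 : |c (k+1)| = φ ^ (k+1) / Real.Gamma (γ * (k+1:ℕ)) := by
      rw [eq_div_iff hΓ.ne']; exact habscoef k
    rw [h2]
    have hΓ2 : (0:ℝ) < Real.Gamma (γ * k + 1) := Real.Gamma_pos_of_pos (by positivity)
    field_simp
  have heval : ∀ k : ℕ, e (k+1)
      = (-φ) ^ (k+1) * ((t ^ γ) ^ k * Real.Gamma (1-γ) / Real.Gamma (γ * k + 1)) := by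
    intro k
    rw [he]
    simp only
    rw [hG]
    simp only
    rw [MeasureTheory.integral_const_mul, hbetaval k]
    have hΓ : 0 < Real.Gamma (γ * (k+1:ℕ)) := Real.Gamma_pos_of_pos (hcast k)
    have h2 : c (k+1) = (-φ) ^ (k+1) / Real.Gamma (γ * (k+1:ℕ)) := by
      rw [eq_div_iff hΓ.ne']; exact hcoef k
    rw [h2]
    have hΓ2 : (0:ℝ) < Real.Gamma (γ * k + 1) := Real.Gamma_pos_of_pos (by positivity)
    field_simp
  have hw0 : w 0 = 0 := by
    rw [hw]
    simp only
    have hz : G 0 = fun _ => 0 := by funext s; simp [hG, hc]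
    rw [hz]
    simp
  have he0 : e 0 = 0 := by
    rw [he]
    simp only
    have hz : G 0 = fun _ => 0 := by funext s; simp [hG, hc]
    rw [hz]
    simp
  have htγ : (0:ℝ) ≤ φ * t ^ γ := mul_nonneg hφ.le (Real.rpow_nonneg ht.le _)
  have hwsummable : Summable w := by
    rw [← summable_nat_add_iff 1]
    have hbase := (summable_ml hγ0 hγ1 htγ).mul_left (φ * Real.Gamma (1-γ))
    refine Summable.of_nonneg_of_le (fun k => ?_) (fun k => ?_) hbase
    · rw [hwval k]
      positivity
    · rw [hwval k, mul_pow, pow_succ]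
      have hΓ2 : (0:ℝ) < Real.Gamma (γ * k + 1) := Real.Gamma_pos_of_pos (by positivity)
      have hΓ3 : (0:ℝ) < Real.Gamma (1 - γ) := Real.Gamma_pos_of_pos hγ1'
      have h8 : (0:ℝ) ≤ (t ^ γ) ^ k * Real.Gamma (1-γ) / Real.Gamma (γ * ↑k + 1) := by positivity
      have h9 : (0:ℝ) ≤ φ ^ k * φ := by positivity
      have h10 : (0:ℝ) ≤ (k:ℝ) := Nat.cast_nonneg k
      calc φ ^ k * φ * ((t ^ γ) ^ k * Real.Gamma (1-γ) / Real.Gamma (γ * ↑k + 1))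
          ≤ ((k:ℝ)+1) * (φ ^ k * φ) * ((t ^ γ) ^ k * Real.Gamma (1-γ) / Real.Gamma (γ * ↑k + 1)) := by
            nlinarith [mul_nonneg h10 (mul_nonneg h9 h8)]
        _ = φ * Real.Gamma (1-γ) * (((k:ℝ) + 1) * (φ ^ k * (t ^ γ) ^ k) / Real.Gamma (γ * ↑k + 1)) := by
            field_simp
  have hesummable : Summable e := by
    refine Summable.of_norm_bounded hwsummable (fun i => ?_)
    rw [he, hw]
    exact MeasureTheory.norm_integral_le_integral_norm _
  have hswap : ∑' i, e i = ∫ s in Set.Ioc (0:ℝ) t, ∑' i, G i s :=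
    MeasureTheory.integral_tsum_of_summable_integral_norm hGint hwsummable
  -- final computation
  simp only [caputo]
  rw [intervalIntegral.integral_of_le ht.le]
  have hcong : ∫ s in Set.Ioc (0:ℝ) t, (t - s) ^ (-γ) * deriv y s
      = ∫ s in Set.Ioc (0:ℝ) t, ∑' i, G i s := by
    refine MeasureTheory.setIntegral_congr_fun measurableSet_Ioc fun s hs => ?_
    rw [hderiv s hs.1, ← tsum_mul_left]
    exact tsum_congr fun i => by rw [hG]; ring
  rw [hcong, ← hswap]
  rw [Summable.tsum_eq_zero_add hesummable, he0, zero_add]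
  have hterm : ∀ k : ℕ, e (k+1)
      = Real.Gamma (1-γ) * (-φ * ((-φ * t ^ γ) ^ k / Real.Gamma (γ * k + 1))) := by
    intro k
    rw [heval k, mul_pow, pow_succ]
    ring
  rw [tsum_congr hterm, tsum_mul_left, ← mul_assoc,
    inv_mul_cancel₀ (Real.Gamma_pos_of_pos hγ1').ne', one_mul, tsum_mul_left]
  rw [hy]
  simp only [mittagLeffler]
end
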